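/- Fix a transcript prefix π of length t−1, a new triple (x, y, p̂) with y ∈ {0,1}, and f with f(x)² ≤ B for all x. Let uK₂(π, f) = Σ_p n(π,p)·K(π,p,f)² denote the unnormalized L2-multicalibration error, where K(π,p,f) = (1/n(π,p)) Σ_{τ∈S(π,p)} f(x_τ)(y_τ − p̂_τ) when n(π,p) ≥ 1 and 0 otherwise. If n(π, p̂) ≥ 1, then uK₂(π ∘ (x,y,p̂), f) − uK₂(π, f) ≤ B/n(π, p̂) + 2·f(x)·(y − p̂)·K(π, p̂, f). If n(π, p̂) = 0, the increase is at most B. -/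

import Mathlib

/-- Number of rounds in `A` on which forecast `p` was made. -/
noncomputable def nC {ι : Type*} (A : Finset ι) (phat : ι → ℝ) (p : ℝ) : ℕ :=
  (A.filter (fun t => phat t = p)).card

/-- Calibration error of forecast `p` on the transcript `A` with respect to `f`
(`0` if `p` never occurs). -/
noncomputable def Kerr {ι X : Type*} (A : Finset ι) (phat : ι → ℝ) (x : ι → X) (y : ι → ℝ)
    (f : X → ℝ) (p : ℝ) : ℝ :=
  if 1 ≤ nC A phat p then
    (1 / (nC A phat p : ℝ)) * ∑ t ∈ A.filter (fun t => phat t = p), f (x t) * (y t - phat t)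
  else 0

/-- Unnormalized L2-multicalibration error `Σ_p n(p)·K(p,f)²`. -/
noncomputable def uK2 {ι X : Type*} (A : Finset ι) (phat : ι → ℝ) (x : ι → X) (y : ι → ℝ)
    (f : X → ℝ) : ℝ :=
  ∑ p ∈ A.image phat, (nC A phat p : ℝ) * (Kerr A phat x y f p) ^ 2

/-- Appending a round `(x t₀, y t₀, p̂ t₀)` increases the unnormalized L2-multicalibration
error by at most `B/n(π,p̂) + 2·f(x)(y − p̂)·K(π,p̂,f)` when `n(π,p̂) ≥ 1`, and by at most `B`
otherwise. -/
theorem uK2_increase_bound {ι X : Type*} [DecidableEq ι]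
    (π : Finset ι) (t0 : ι) (ht0 : t0 ∉ π)
    (phat : ι → ℝ) (x : ι → X) (y : ι → ℝ)
    (hy : y t0 = 0 ∨ y t0 = 1) (hp : phat t0 ∈ Set.Icc (0:ℝ) 1)
    (B : ℝ) (f : X → ℝ) (hf : ∀ z, (f z) ^ 2 ≤ B) :
    (1 ≤ nC π phat (phat t0) →
      uK2 (insert t0 π) phat x y f - uK2 π phat x y f ≤
        B / (nC π phat (phat t0) : ℝ) +
          2 * (f (x t0) * (y t0 - phat t0)) * Kerr π phat x y f (phat t0)) ∧
    (nC π phat (phat t0) = 0 →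
      uK2 (insert t0 π) phat x y f - uK2 π phat x y f ≤ B) := by
  have hB0 : 0 ≤ B := le_trans (sq_nonneg _) (hf (x t0))
  set p0 := phat t0 with hp0
  set c := f (x t0) * (y t0 - p0) with hc
  have hc2 : c ^ 2 ≤ B := by
    have h1 : (y t0 - p0) ^ 2 ≤ 1 := by
      obtain ⟨ha, hb⟩ := hp
      rcases hy with h | h <;> rw [h] <;> nlinarith
    rw [hc]
    nlinarith [hf (x t0), sq_nonneg (f (x t0)), sq_nonneg (y t0 - p0)]
  have hfe : (insert t0 π).filter (fun t => phat t = p0)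
      = insert t0 (π.filter (fun t => phat t = p0)) := by
    rw [Finset.filter_insert, if_pos hp0.symm]
  have hfn : ∀ p, p ≠ p0 → (insert t0 π).filter (fun t => phat t = p)
      = π.filter (fun t => phat t = p) := by
    intro p hpne
    rw [Finset.filter_insert, if_neg (fun h => hpne (hp0.trans h).symm)]
  have hnCn : ∀ p, p ≠ p0 → nC (insert t0 π) phat p = nC π phat p := by
    intro p h; unfold nC; rw [hfn p h]
  have hKn : ∀ p, p ≠ p0 → Kerr (insert t0 π) phat x y f p = Kerr π phat x y f p := by
    intro p h; unfold Kerr; rw [hnCn p h, hfn p h]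
  have ht0f : t0 ∉ π.filter (fun t => phat t = p0) :=
    fun h => ht0 (Finset.mem_of_mem_filter _ h)
  have hnCe : nC (insert t0 π) phat p0 = nC π phat p0 + 1 := by
    unfold nC; rw [hfe, Finset.card_insert_of_notMem ht0f]
  set S := ∑ t ∈ π.filter (fun t => phat t = p0), f (x t) * (y t - phat t) with hS
  have hsum : ∑ t ∈ (insert t0 π).filter (fun t => phat t = p0), f (x t) * (y t - phat t)
      = c + S := by
    rw [hfe, Finset.sum_insert ht0f, hc, hp0]
  have himg : (insert t0 π).image phat = insert p0 (π.image phat) := by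
    rw [Finset.image_insert, hp0]
  constructor
  · intro hn
    have hmem : p0 ∈ π.image phat := by
      obtain ⟨t, ht⟩ := Finset.card_pos.mp hn
      exact Finset.mem_image.mpr ⟨t, Finset.mem_of_mem_filter _ ht,
        (Finset.mem_filter.mp ht).2⟩
    have himg' : (insert t0 π).image phat = π.image phat := by
      rw [himg, Finset.insert_eq_self.mpr hmem]
    set N := ((nC π phat p0 : ℕ) : ℝ) with hN
    have hN1 : (1:ℝ) ≤ N := by rw [hN]; exact_mod_cast hn
    have hN0 : (0:ℝ) < N := lt_of_lt_of_le one_pos hN1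
    have hdiff : uK2 (insert t0 π) phat x y f - uK2 π phat x y f
        = (nC (insert t0 π) phat p0 : ℝ) * (Kerr (insert t0 π) phat x y f p0) ^ 2
          - N * (Kerr π phat x y f p0) ^ 2 := by
      unfold uK2
      rw [himg', ← Finset.sum_sub_distrib]
      refine Finset.sum_eq_single_of_mem p0 hmem ?_
      intro p hpI hpne
      rw [hnCn p hpne, hKn p hpne, sub_self]
    have hK0 : Kerr π phat x y f p0 = (1 / N) * S := by
      unfold Kerr; rw [if_pos hn]
    have hK1 : Kerr (insert t0 π) phat x y f p0 = (1 / (N + 1)) * (c + S) := by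
      unfold Kerr
      rw [hnCe, hsum, if_pos (Nat.le_add_left 1 _)]
      push_cast
      ring_nf
      rw [hN]
      ring
    rw [hdiff, hK0, hK1, hnCe]
    push_cast
    have e1 : (N + 1) * ((1 / (N + 1)) * (c + S)) ^ 2 = (c + S) ^ 2 / (N + 1) := by
      field_simp
    have e2 : N * ((1 / N) * S) ^ 2 = S ^ 2 / N := by
      field_simp
    rw [e1, e2]
    have h1 : (c + S) ^ 2 / (N + 1) ≤ (S ^ 2 + B + 2 * c * S) / N := by
      rw [div_le_div_iff₀ (by linarith) hN0]
      nlinarith [sq_nonneg (c + S)]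
    have h2 : (S ^ 2 + B + 2 * c * S) / N
        = S ^ 2 / N + (B / N + 2 * c * ((1 / N) * S)) := by
      ring
    linarith
  · intro h0
    have hfe0 : π.filter (fun t => phat t = p0) = ∅ := Finset.card_eq_zero.mp h0
    have hS0 : S = 0 := by rw [hS, hfe0, Finset.sum_empty]
    have hnot : p0 ∉ π.image phat := by
      intro hmem
      obtain ⟨t, htπ, hte⟩ := Finset.mem_image.mp hmem
      have : t ∈ π.filter (fun t => phat t = p0) := Finset.mem_filter.mpr ⟨htπ, hte⟩
      rw [hfe0] at this
      exact absurd this (Finset.notMem_empty t)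
    have hK1 : Kerr (insert t0 π) phat x y f p0 = c := by
      unfold Kerr
      rw [hnCe, h0, hsum, hS0, if_pos le_rfl]
      norm_num
    have hsame : ∑ p ∈ π.image phat, (nC (insert t0 π) phat p : ℝ)
          * (Kerr (insert t0 π) phat x y f p) ^ 2
        = ∑ p ∈ π.image phat, (nC π phat p : ℝ) * (Kerr π phat x y f p) ^ 2 := by
      refine Finset.sum_congr rfl ?_
      intro p hpI
      have hpne : p ≠ p0 := fun h => hnot (h ▸ hpI)
      rw [hnCn p hpne, hKn p hpne]
    have : uK2 (insert t0 π) phat x y f - uK2 π phat x y f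
        = (nC (insert t0 π) phat p0 : ℝ) * (Kerr (insert t0 π) phat x y f p0) ^ 2 := by
      unfold uK2
      rw [himg, Finset.sum_insert hnot, hsame]
      ring
    rw [this, hK1, hnCe, h0]
    norm_num
    exact hc2
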